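/- Combining the τ-coverage bound and the curvature bound: if for all i and t the active sets satisfy max_{j∈A_i(t)}[∇F(x(t))]_j ≥ max{τ, 1−c}·max_{j∈P_i}[∇F(x(t))]_j, then the continuous-time ATCG trajectory satisfies F(x(t)) ≥ (1 − e^{−max{τ,1−c}·t})·F(x*) for all t ∈ [0,1]. -/

import Mathlib

open Finset

/-- The multilinear extension. -/
def mlext (n : ℕ) (f : Finset (Fin n) → ℝ) (x : Fin n → ℝ) : ℝ :=
  ∑ R : Finset (Fin n), f R * (∏ p ∈ R, x p) * ∏ p ∈ Rᶜ, (1 - x p)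

/-- Partial derivative (gradient coordinate) of the multilinear extension. -/
def mlgrad (n : ℕ) (f : Finset (Fin n) → ℝ) (x : Fin n → ℝ) (j : Fin n) : ℝ :=
  ∑ R ∈ ((univ : Finset (Fin n)).erase j).powerset,
    (f (insert j R) - f R) * (∏ p ∈ R, x p) *
      ∏ p ∈ ((univ : Finset (Fin n)).erase j) \ R, (1 - x p)

variable {n : ℕ}

lemma compl_insert_eq (j : Fin n) (S : Finset (Fin n)) :
    (insert j S)ᶜ = ((univ : Finset (Fin n)).erase j) \ S := by
  ext p; simp [not_or]

lemma compl_erase_eq (j : Fin n) (S : Finset (Fin n)) :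
    Sᶜ.erase j = ((univ : Finset (Fin n)).erase j) \ S := by
  ext p; simp

lemma sum_ite_mem_insert (j : Fin n) (g : Finset (Fin n) → ℝ) :
    (∑ R : Finset (Fin n), if j ∈ R then g R else 0)
      = ∑ S ∈ ((univ : Finset (Fin n)).erase j).powerset, g (insert j S) := by
  rw [← Finset.sum_filter]
  apply Finset.sum_nbij' (fun R => R.erase j) (fun S => insert j S)
  · intro R hR
    simp only [Finset.mem_powerset]
    exact Finset.erase_subset_erase _ (Finset.subset_univ R)
  · intro S hS
    simp only [Finset.mem_filter, Finset.mem_univ, true_and]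
    exact Finset.mem_insert_self _ _
  · intro R hR
    simp only [Finset.mem_filter] at hR
    exact Finset.insert_erase hR.2
  · intro S hS
    simp only [Finset.mem_powerset, Finset.subset_erase] at hS
    exact Finset.erase_insert hS.2
  · intro R hR
    simp only [Finset.mem_filter] at hR
    rw [Finset.insert_erase hR.2]

lemma sum_ite_not_mem (j : Fin n) (g : Finset (Fin n) → ℝ) :
    (∑ R : Finset (Fin n), if j ∉ R then g R else 0)
      = ∑ S ∈ ((univ : Finset (Fin n)).erase j).powerset, g S := by
  rw [← Finset.sum_filter]
  apply Finset.sum_congr _ (fun _ _ => rfl)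
  ext S
  simp [Finset.subset_erase]

lemma sum_ite_mem_compl (j : Fin n) (g : Finset (Fin n) → ℝ) :
    (∑ R : Finset (Fin n), if j ∈ Rᶜ then g R else 0)
      = ∑ S ∈ ((univ : Finset (Fin n)).erase j).powerset, g S := by
  simp only [Finset.mem_compl]
  exact sum_ite_not_mem j g

lemma grad_sum_eq (f : Finset (Fin n) → ℝ) (y w : Fin n → ℝ) :
    ∑ j, w j * mlgrad n f y j =
      ∑ R : Finset (Fin n),
        (f R * (∑ p ∈ R, (∏ q ∈ R.erase p, y q) * w p) * (∏ p ∈ Rᶜ, (1 - y p))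
          + f R * (∏ p ∈ R, y p) * (∑ p ∈ Rᶜ, (∏ q ∈ Rᶜ.erase p, (1 - y q)) * (-(w p)))) := by
  have hA : ∀ R : Finset (Fin n),
      f R * (∑ p ∈ R, (∏ q ∈ R.erase p, y q) * w p) * (∏ p ∈ Rᶜ, (1 - y p))
        = ∑ p : Fin n, (if p ∈ R then
            f R * (∏ q ∈ R.erase p, y q) * (∏ q ∈ Rᶜ, (1 - y q)) * w p else 0) := by
    intro R
    rw [Finset.sum_ite_mem, Finset.univ_inter, Finset.mul_sum, Finset.sum_mul]
    exact Finset.sum_congr rfl fun p _ => by ring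
  have hB : ∀ R : Finset (Fin n),
      f R * (∏ p ∈ R, y p) * (∑ p ∈ Rᶜ, (∏ q ∈ Rᶜ.erase p, (1 - y q)) * (-(w p)))
        = ∑ p : Fin n, (if p ∈ Rᶜ then
            -(f R * (∏ q ∈ R, y q) * (∏ q ∈ Rᶜ.erase p, (1 - y q)) * w p) else 0) := by
    intro R
    rw [Finset.sum_ite_mem, Finset.univ_inter, Finset.mul_sum]
    exact Finset.sum_congr rfl fun p _ => by ring
  calc ∑ j, w j * mlgrad n f y j
      = ∑ j : Fin n,
          ((∑ R : Finset (Fin n), if j ∈ R then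
              f R * (∏ q ∈ R.erase j, y q) * (∏ q ∈ Rᶜ, (1 - y q)) * w j else 0)
            + ∑ R : Finset (Fin n), if j ∈ Rᶜ then
              -(f R * (∏ q ∈ R, y q) * (∏ q ∈ Rᶜ.erase j, (1 - y q)) * w j) else 0) := by
        refine Finset.sum_congr rfl fun j _ => ?_
        rw [sum_ite_mem_insert, sum_ite_mem_compl, mlgrad, Finset.mul_sum,
          ← Finset.sum_add_distrib]
        refine Finset.sum_congr rfl fun S hS => ?_
        rw [Finset.mem_powerset, Finset.subset_erase] at hS
        rw [compl_insert_eq, compl_erase_eq, Finset.erase_insert hS.2]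
        ring
    _ = ∑ j : Fin n, ∑ R : Finset (Fin n),
          ((if j ∈ R then
              f R * (∏ q ∈ R.erase j, y q) * (∏ q ∈ Rᶜ, (1 - y q)) * w j else 0)
            + (if j ∈ Rᶜ then
              -(f R * (∏ q ∈ R, y q) * (∏ q ∈ Rᶜ.erase j, (1 - y q)) * w j) else 0)) := by
        exact Finset.sum_congr rfl fun j _ => (Finset.sum_add_distrib).symm
    _ = ∑ R : Finset (Fin n), ∑ j : Fin n,
          ((if j ∈ R then
              f R * (∏ q ∈ R.erase j, y q) * (∏ q ∈ Rᶜ, (1 - y q)) * w j else 0)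
            + (if j ∈ Rᶜ then
              -(f R * (∏ q ∈ R, y q) * (∏ q ∈ Rᶜ.erase j, (1 - y q)) * w j) else 0)) :=
        Finset.sum_comm
    _ = _ := by
        refine Finset.sum_congr rfl fun R _ => ?_
        rw [Finset.sum_add_distrib, ← hA R, ← hB R]

lemma hasDerivAt_mlext (f : Finset (Fin n) → ℝ) (x : ℝ → Fin n → ℝ) (w : Fin n → ℝ) (t : ℝ)
    (h : HasDerivAt x w t) :
    HasDerivAt (fun s => mlext n f (x s)) (∑ j, w j * mlgrad n f (x t) j) t := by
  have hx : ∀ p, HasDerivAt (fun s => x s p) (w p) t := hasDerivAt_pi.1 h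
  have hterm : ∀ R : Finset (Fin n), HasDerivAt
      (fun s => f R * (∏ p ∈ R, x s p) * ∏ p ∈ Rᶜ, (1 - x s p))
      (f R * (∑ p ∈ R, (∏ q ∈ R.erase p, x t q) * w p) * (∏ p ∈ Rᶜ, (1 - x t p))
        + f R * (∏ p ∈ R, x t p)
          * (∑ p ∈ Rᶜ, (∏ q ∈ Rᶜ.erase p, (1 - x t q)) * (-(w p)))) t := by
    intro R
    have h1 : HasDerivAt (fun s => ∏ p ∈ R, x s p)
        (∑ p ∈ R, (∏ q ∈ R.erase p, x t q) * w p) t := by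
      simpa using HasDerivAt.fun_finsetProd (u := R) (f := fun p s => x s p) (fun p _ => hx p)
    have h2 : HasDerivAt (fun s => ∏ p ∈ Rᶜ, (1 - x s p))
        (∑ p ∈ Rᶜ, (∏ q ∈ Rᶜ.erase p, (1 - x t q)) * (-(w p))) t := by
      simpa using HasDerivAt.fun_finsetProd (u := Rᶜ) (f := fun p s => 1 - x s p)
        (fun p _ => (hx p).const_sub 1)
    have := (h1.const_mul (f R)).fun_mul h2
    convert this using 1
  have hsum := HasDerivAt.fun_sum (u := (univ : Finset (Finset (Fin n)))) (fun R _ => hterm R)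
  rw [grad_sum_eq f (x t) w]
  exact hsum

lemma mlext_zero (f : Finset (Fin n) → ℝ) : mlext n f 0 = f ∅ := by
  rw [mlext, Finset.sum_eq_single ∅]
  · simp
  · intro R _ hR
    obtain ⟨p, hp⟩ := Finset.nonempty_iff_ne_empty.2 hR
    rw [Finset.prod_eq_zero hp (by simp)]
    ring
  · simp

lemma mlgrad_nonneg (f : Finset (Fin n) → ℝ)
    (hmono : ∀ A B : Finset (Fin n), A ⊆ B → f A ≤ f B)
    (y : Fin n → ℝ) (hy : ∀ p, y p ∈ Set.Icc (0 : ℝ) 1) (j : Fin n) :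
    0 ≤ mlgrad n f y j := by
  refine Finset.sum_nonneg fun S _ => ?_
  refine mul_nonneg (mul_nonneg ?_ (Finset.prod_nonneg fun p _ => (hy p).1))
    (Finset.prod_nonneg fun p _ => by linarith [(hy p).2])
  exact sub_nonneg.2 (hmono _ _ (Finset.subset_insert _ _))

/-- curvature-aware ATCG guarantee: with `ρ = max{τ, 1−c}`, if the
active sets satisfy the `ρ`-coverage condition
`max_{j∈A_i(t)} [∇F(x(t))]_j ≥ ρ·max_{j∈P_i} [∇F(x(t))]_j` along the continuous-time
ATCG trajectory `x′(t) = v(t)` (the per-partition active-set argmax direction),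
`x(0) = 0`, with `x*` a maximizer of `F` over the partition-matroid polytope
(`κ_i = 1`) and the key inequality `⟨x*, ∇F(x)⟩ ≥ F(x*) − F(x)`, then
`F(x(t)) ≥ (1 − e^{−ρt})·F(x*)` for all `t ∈ [0,1]`. -/
theorem atcg_curvature_aware_guarantee (n N : ℕ) (f : Finset (Fin n) → ℝ)
    (hsub : ∀ A B : Finset (Fin n), A ⊆ B → ∀ e ∉ B,
      f (insert e B) - f B ≤ f (insert e A) - f A)
    (hmono : ∀ A B : Finset (Fin n), A ⊆ B → f A ≤ f B)
    (hnorm : f ∅ = 0)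
    (c : ℝ) (hc0 : 0 ≤ c) (hc1 : c ≤ 1)
    (τ : ℝ) (hτ0 : 0 < τ) (hτ1 : τ ≤ 1)
    -- partition of the ground set
    (P : Fin N → Finset (Fin n))
    (hdisj : ∀ i i' : Fin N, i ≠ i' → Disjoint (P i) (P i'))
    (hcover : ∀ j : Fin n, ∃ i, j ∈ P i)
    (hPne : ∀ i, (P i).Nonempty)
    -- maximizer of F over the partition-matroid polytope with κ_i = 1
    (xstar : Fin n → ℝ) (hxstar_box : ∀ p, xstar p ∈ Set.Icc (0 : ℝ) 1)
    (hxstar_mat : ∀ i, ∑ j ∈ P i, xstar j ≤ 1)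
    (hxstar_opt : ∀ y : Fin n → ℝ, (∀ p, y p ∈ Set.Icc (0 : ℝ) 1) →
      (∀ i, ∑ j ∈ P i, y j ≤ 1) → mlext n f y ≤ mlext n f xstar)
    -- key inequality of the multilinear extension (assumed, per the paper)
    (hkey : ∀ y : Fin n → ℝ, (∀ p, y p ∈ Set.Icc (0 : ℝ) 1) →
      ∑ j, xstar j * mlgrad n f y j ≥ mlext n f xstar - mlext n f y)
    -- trajectory, active sets and the per-partition active-set argmax direction
    (x v : ℝ → Fin n → ℝ)
    (A : Fin N → ℝ → Finset (Fin n))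
    (hAsub : ∀ i t, A i t ⊆ P i) (hAne : ∀ i t, (A i t).Nonempty)
    (a : Fin N → ℝ → Fin n)
    (haA : ∀ i t, a i t ∈ A i t)
    (hamax : ∀ i t, ∀ j ∈ A i t, mlgrad n f (x t) j ≤ mlgrad n f (x t) (a i t))
    (hv : ∀ t j, v t j = ∑ i : Fin N, if a i t = j then (1 : ℝ) else 0)
    (hx0 : x 0 = 0)
    (hxbox : ∀ t ∈ Set.Icc (0 : ℝ) 1, ∀ p, x t p ∈ Set.Icc (0 : ℝ) 1)
    (hxderiv : ∀ t ∈ Set.Icc (0 : ℝ) 1, HasDerivAt x (v t) t)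
    -- the max{τ, 1−c}-coverage condition on the active sets
    (hcov : ∀ i, ∀ t ∈ Set.Icc (0 : ℝ) 1,
      (A i t).sup' (hAne i t) (fun j => mlgrad n f (x t) j) ≥
        max τ (1 - c) * (P i).sup' (hPne i) (fun j => mlgrad n f (x t) j)) :
    ∀ t ∈ Set.Icc (0 : ℝ) 1,
      mlext n f (x t) ≥ (1 - Real.exp (-(max τ (1 - c)) * t)) * mlext n f xstar := by
  intro t ht
  have hρpos : 0 < max τ (1 - c) := lt_of_lt_of_le hτ0 (le_max_left _ _)
  set ρ := max τ (1 - c) with hρdef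
  set Fs := mlext n f xstar with hFsdef
  have hgderiv : ∀ s ∈ Set.Icc (0:ℝ) 1,
      HasDerivAt (fun u => mlext n f (x u)) (∑ j, v s j * mlgrad n f (x s) j) s :=
    fun s hs => hasDerivAt_mlext f x (v s) s (hxderiv s hs)
  have hlb : ∀ s ∈ Set.Icc (0:ℝ) 1,
      ρ * (Fs - mlext n f (x s)) ≤ ∑ j, v s j * mlgrad n f (x s) j := by
    intro s hs
    set G : Fin n → ℝ := fun j => mlgrad n f (x s) j with hG
    have hGnn : ∀ j, 0 ≤ G j := fun j => mlgrad_nonneg f hmono (x s) (hxbox s hs) j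
    have e1 : ∑ j, v s j * G j = ∑ i : Fin N, G (a i s) := by
      calc ∑ j, v s j * G j = ∑ j, ∑ i : Fin N, (if a i s = j then G j else 0) := by
            refine Finset.sum_congr rfl fun j _ => ?_
            rw [hv s j, Finset.sum_mul]
            exact Finset.sum_congr rfl fun i _ => by split <;> simp
        _ = ∑ i : Fin N, ∑ j, (if a i s = j then G j else 0) := Finset.sum_comm
        _ = ∑ i : Fin N, G (a i s) := by
            refine Finset.sum_congr rfl fun i _ => ?_
            rw [Finset.sum_ite_eq]
            simp
    have e2 : ∀ i : Fin N, ρ * ∑ j ∈ P i, xstar j * G j ≤ G (a i s) := by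
      intro i
      have h1 : (A i s).sup' (hAne i s) G ≤ G (a i s) :=
        Finset.sup'_le _ _ fun j hj => hamax i s j hj
      have h2 : ρ * (P i).sup' (hPne i) G ≤ (A i s).sup' (hAne i s) G := hcov i s hs
      have h3 : ∑ j ∈ P i, xstar j * G j ≤ (P i).sup' (hPne i) G := by
        have hsupnn : 0 ≤ (P i).sup' (hPne i) G := by
          obtain ⟨j0, hj0⟩ := hPne i
          exact le_trans (hGnn j0) (Finset.le_sup' G hj0)
        calc ∑ j ∈ P i, xstar j * G j
            ≤ ∑ j ∈ P i, xstar j * (P i).sup' (hPne i) G :=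
              Finset.sum_le_sum fun j hj =>
                mul_le_mul_of_nonneg_left (Finset.le_sup' G hj) (hxstar_box j).1
          _ = (∑ j ∈ P i, xstar j) * (P i).sup' (hPne i) G := by rw [Finset.sum_mul]
          _ ≤ 1 * (P i).sup' (hPne i) G :=
              mul_le_mul_of_nonneg_right (hxstar_mat i) hsupnn
          _ = _ := one_mul _
      calc ρ * ∑ j ∈ P i, xstar j * G j ≤ ρ * (P i).sup' (hPne i) G :=
            mul_le_mul_of_nonneg_left h3 hρpos.le
        _ ≤ _ := le_trans h2 h1
    have e3 : ∑ j, xstar j * G j = ∑ i : Fin N, ∑ j ∈ P i, xstar j * G j := by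
      have hbU : Finset.univ.biUnion P = (univ : Finset (Fin n)) := by
        ext j
        simp only [Finset.mem_biUnion, Finset.mem_univ, true_and, iff_true]
        exact hcover j
      rw [← hbU, Finset.sum_biUnion (fun i _ i' _ hne => hdisj i i' hne)]
    calc ρ * (Fs - mlext n f (x s)) ≤ ρ * ∑ j, xstar j * G j :=
          mul_le_mul_of_nonneg_left (hkey (x s) (hxbox s hs)) hρpos.le
      _ = ∑ i : Fin N, ρ * ∑ j ∈ P i, xstar j * G j := by rw [e3, Finset.mul_sum]
      _ ≤ ∑ i : Fin N, G (a i s) := Finset.sum_le_sum fun i _ => e2 i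
      _ = ∑ j, v s j * G j := e1.symm
  set h : ℝ → ℝ := fun s => Real.exp (ρ * s) * (mlext n f (x s) - Fs) with hhdef
  have hhderiv : ∀ s ∈ Set.Icc (0:ℝ) 1, HasDerivAt h
      (Real.exp (ρ * s) * ρ * (mlext n f (x s) - Fs)
        + Real.exp (ρ * s) * (∑ j, v s j * mlgrad n f (x s) j)) s := by
    intro s hs
    have he : HasDerivAt (fun u => Real.exp (ρ * u)) (Real.exp (ρ * s) * ρ) s := by
      exact (Real.hasDerivAt_exp (ρ * s)).comp s
        (by simpa using (hasDerivAt_id s).const_mul ρ : HasDerivAt (fun u => ρ * u) ρ s)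
    exact he.mul ((hgderiv s hs).sub_const Fs)
  have hmonoh : MonotoneOn h (Set.Icc 0 1) := by
    apply monotoneOn_of_deriv_nonneg (convex_Icc 0 1)
    · exact fun s hs => ((hhderiv s hs).continuousAt).continuousWithinAt
    · intro s hs
      rw [interior_Icc] at hs
      exact ((hhderiv s (Set.Ioo_subset_Icc_self hs)).differentiableAt).differentiableWithinAt
    · intro s hs
      rw [interior_Icc] at hs
      have hs' := Set.Ioo_subset_Icc_self hs
      rw [(hhderiv s hs').deriv]
      have hd := hlb s hs'
      nlinarith [Real.exp_pos (ρ * s)]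
  have hle : h 0 ≤ h t := hmonoh (Set.left_mem_Icc.2 zero_le_one) ht ht.1
  have h0 : h 0 = -Fs := by
    simp [hhdef, hx0, mlext_zero, hnorm]
  rw [h0, hhdef] at hle
  have hprod : Real.exp (-ρ * t) * Real.exp (ρ * t) = 1 := by
    rw [← Real.exp_add]
    norm_num
  rw [ge_iff_le]
  simp only [] at hle
  have hle' := mul_le_mul_of_nonneg_left hle (Real.exp_pos (-ρ * t)).le
  rw [← mul_assoc, hprod, one_mul] at hle'
  nlinarith [hle']
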